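/- Fix a real number v̄ > 0, an even integer l ≥ 1 with E_l = (πl)², and a compact set K ⊂ ℝ. There exist ε₀ > 0 and a constant C such that for all v ∈ K and all 0 < ε ≤ ε₀, writing ṽ = v − v̄: ‖M^ε·T(v, E_l + ε)·(M^ε)^{−1} − ([[1 − η·ε^{1/2}, 0],[0, 1 + η·ε^{1/2}]] + ε^{1/2}·(ṽ/(2·(2v̄E_l)^{1/2}))·[[−1, 1],[−1, 1]] + ε·(v/(4E_l))·[[1, 1],[1, 1]])‖ ≤ C·ε^{3/2}. -/

import Mathlib

open Matrix Real Filter MeasureTheory ProbabilityTheory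

noncomputable section

/-- Principal branch of the complex square root. -/
def csqrt (z : ℂ) : ℂ := z ^ (1/2 : ℂ)

/-- One-step transfer matrix of the random Kronig-Penney model at complex energy. -/
def TmatC (v : ℝ) (z : ℂ) : Matrix (Fin 2) (Fin 2) ℂ :=
  !![1, (v : ℂ); 0, 1] *
  !![Complex.cos (csqrt z), -(csqrt z) * Complex.sin (csqrt z);
     Complex.sin (csqrt z) / (csqrt z), Complex.cos (csqrt z)]

/-- One-step transfer matrix at positive real energy. -/
def TmatR (v E : ℝ) : Matrix (Fin 2) (Fin 2) ℝ :=
  !![1, v; 0, 1] *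
  !![Real.cos (Real.sqrt E), -(Real.sqrt E) * Real.sin (Real.sqrt E);
     Real.sin (Real.sqrt E) / Real.sqrt E, Real.cos (Real.sqrt E)]

/-- Euclidean norm of a vector in ℝ². -/
def vnormR (x : Fin 2 → ℝ) : ℝ := ‖(WithLp.equiv 2 (Fin 2 → ℝ)).symm x‖

/-- Euclidean norm of a vector in ℂ². -/
def vnormC (x : Fin 2 → ℂ) : ℝ := ‖(WithLp.equiv 2 (Fin 2 → ℂ)).symm x‖

/-- Operator norm of a real 2×2 matrix w.r.t. the Euclidean norm. -/
def opR (A : Matrix (Fin 2) (Fin 2) ℝ) : ℝ :=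
  ‖LinearMap.toContinuousLinearMap (Matrix.toEuclideanLin A)‖

/-- Operator norm of a complex 2×2 matrix w.r.t. the Euclidean norm. -/
def opC (A : Matrix (Fin 2) (Fin 2) ℂ) : ℝ :=
  ‖LinearMap.toContinuousLinearMap (Matrix.toEuclideanLin A)‖

/-- The unit vector with angle θ. -/
def eth (θ : ℝ) : Fin 2 → ℝ := ![Real.cos θ, Real.sin θ]

/-- The circle map S_A on [0, 2π) induced by an (invertible) matrix A. -/
def SMap (A : Matrix (Fin 2) (Fin 2) ℝ) (θ : ℝ) : ℝ :=
  toIcoMod Real.two_pi_pos 0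
    (Complex.arg (Complex.mk ((A.mulVec (eth θ)) 0) ((A.mulVec (eth θ)) 1)))

/-- critical energy -/
def El (l : ℕ) : ℝ := (Real.pi * l) ^ 2

/-- transfer matrix product T^E(n,m) = T(v_n) ⋯ T(v_{m+1}), real energy, ℕ indices. -/
def TprodR (v : ℕ → ℝ) (E : ℝ) (n m : ℕ) : Matrix (Fin 2) (Fin 2) ℝ :=
  ((List.range (n - m)).map fun k => TmatR (v (n - k)) E).prod

/-- transfer matrix product, complex energy, ℤ indices. -/
def TprodZC (v : ℤ → ℝ) (z : ℂ) (n m : ℤ) : Matrix (Fin 2) (Fin 2) ℂ :=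
  ((List.range (n - m).toNat).map fun k => TmatC (v (n - k)) z).prod

/-- The basis change matrix M^ε = M₂ · M₁. -/
def Meps (vb : ℝ) (l : ℕ) (ε : ℝ) : Matrix (Fin 2) (Fin 2) ℝ :=
  (let b : ℝ := (vb * El l / 2) ^ ((1 : ℝ)/4)
   !![1/(2*b), -b; 1/(2*b), b]) * !![Real.sqrt ε, 0; 0, 1]

/-- Rotation matrix by angle β. -/
def Rot (β : ℝ) : Matrix (Fin 2) (Fin 2) ℝ :=
  !![Real.cos β, -Real.sin β; Real.sin β, Real.cos β]

/-- Modified Prüfer phases. -/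
def pruefer (vb : ℝ) (l : ℕ) (ε : ℝ) (v : ℕ → ℝ) (θ₀ : ℝ) : ℕ → ℝ
  | 0 => θ₀
  | n + 1 =>
      SMap (Meps vb l ε * TmatR (v (n + 1)) (El l - ε) * (Meps vb l ε)⁻¹)
        (pruefer vb l ε v θ₀ n)


set_option maxHeartbeats 1600000

lemma enorm2 (y : EuclideanSpace ℝ (Fin 2)) : ‖y‖ = Real.sqrt ((y 0)^2 + (y 1)^2) := by
  rw [EuclideanSpace.norm_eq]
  simp [Fin.sum_univ_two, Real.norm_eq_abs, sq_abs]

lemma coord_le (y : EuclideanSpace ℝ (Fin 2)) (i : Fin 2) : |y i| ≤ ‖y‖ := by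
  rw [enorm2, ← Real.sqrt_sq_eq_abs]
  apply Real.sqrt_le_sqrt
  fin_cases i <;> simp <;> nlinarith [sq_nonneg (y 0), sq_nonneg (y 1)]

lemma opR_le_sum_abs (A : Matrix (Fin 2) (Fin 2) ℝ) :
    opR A ≤ |A 0 0| + |A 0 1| + |A 1 0| + |A 1 1| := by
  unfold opR
  refine ContinuousLinearMap.opNorm_le_bound _ (by positivity) fun x => ?_
  have h0 : (LinearMap.toContinuousLinearMap (Matrix.toEuclideanLin A)) x 0
      = A 0 0 * x 0 + A 0 1 * x 1 := by
    simp [Matrix.toEuclideanLin_apply, Matrix.mulVec, dotProduct, Fin.sum_univ_two]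
  have h1 : (LinearMap.toContinuousLinearMap (Matrix.toEuclideanLin A)) x 1
      = A 1 0 * x 0 + A 1 1 * x 1 := by
    simp [Matrix.toEuclideanLin_apply, Matrix.mulVec, dotProduct, Fin.sum_univ_two]
  rw [enorm2, h0, h1]
  have hx0 := coord_le x 0
  have hx1 := coord_le x 1
  have hxn : (0:ℝ) ≤ ‖x‖ := norm_nonneg x
  have key : ∀ a b : ℝ, Real.sqrt (a^2 + b^2) ≤ |a| + |b| := by
    intro a b
    rw [show |a| + |b| = Real.sqrt ((|a|+|b|)^2) by
      rw [Real.sqrt_sq (by positivity)]]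
    apply Real.sqrt_le_sqrt
    nlinarith [abs_nonneg a, abs_nonneg b, sq_abs a, sq_abs b,
      mul_nonneg (abs_nonneg a) (abs_nonneg b)]
  calc Real.sqrt ((A 0 0 * x 0 + A 0 1 * x 1)^2 + (A 1 0 * x 0 + A 1 1 * x 1)^2)
      ≤ |A 0 0 * x 0 + A 0 1 * x 1| + |A 1 0 * x 0 + A 1 1 * x 1| := key _ _
    _ ≤ (|A 0 0| * |x 0| + |A 0 1| * |x 1|) + (|A 1 0| * |x 0| + |A 1 1| * |x 1|) := by
        gcongr <;> exact (abs_add_le _ _).trans (by rw [abs_mul, abs_mul])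
    _ ≤ (|A 0 0| + |A 0 1| + |A 1 0| + |A 1 1|) * ‖x‖ := by
        nlinarith [abs_nonneg (A 0 0), abs_nonneg (A 0 1), abs_nonneg (A 1 0),
          abs_nonneg (A 1 1), abs_nonneg (x 0), abs_nonneg (x 1)]

lemma habs5 (a1 a2 a3 a4 a5 : ℝ) :
    |a1+a2+a3+a4+a5| ≤ |a1|+|a2|+|a3|+|a4|+|a5| := by
  calc |a1+a2+a3+a4+a5| ≤ |a1+a2+a3+a4| + |a5| := abs_add_le _ _
    _ ≤ (|a1+a2+a3| + |a4|) + |a5| := add_le_add_left (abs_add_le _ _) _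
    _ ≤ ((|a1+a2| + |a3|) + |a4|) + |a5| :=
        add_le_add_left (add_le_add_left (abs_add_le _ _) _) _
    _ ≤ (((|a1| + |a2|) + |a3|) + |a4|) + |a5| :=
        add_le_add_left (add_le_add_left (add_le_add_left (abs_add_le _ _) _) _) _

lemma matid (El vb v b k s c se ε : ℝ) (hk : k ≠ 0) (hse : se ≠ 0) (hb : b ≠ 0)
    (hEl : El ≠ 0) (hε2 : se^2 = ε) (hvb : vb = 2*b^4/El) :
    !![se/(2*b), -b; se/(2*b), b] * (!![1, v; 0, 1] *
        !![c, -k*s; s/k, c]) * !![b/se, b/se; -(1/(2*b)), 1/(2*b)] -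
      (!![1 - b^2/El * se, 0; 0, 1 + b^2/El * se]
        + se • (((v - vb) / (2 * (2*b^2))) • !![(-1 : ℝ), 1; -1, 1])
        + ε • ((v / (4 * El)) • !![(1 : ℝ), 1; 1, 1]))
    = !![ (v/2)*(s/k - ε/(2*El)) + (-(b^2/se))*(s/k - ε/(2*El))
            + (se/(4*b^2))*(k*s) + (-(se*v/(4*b^2)))*(c-1) + (c-1),
          (v/2)*(s/k - ε/(2*El)) + (-(b^2/se))*(s/k - ε/(2*El))
            + (-(se/(4*b^2)))*(k*s) + (se*v/(4*b^2))*(c-1) + 0;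
          (v/2)*(s/k - ε/(2*El)) + (b^2/se)*(s/k - ε/(2*El))
            + (se/(4*b^2))*(k*s) + (-(se*v/(4*b^2)))*(c-1) + 0,
          (v/2)*(s/k - ε/(2*El)) + (b^2/se)*(s/k - ε/(2*El))
            + (-(se/(4*b^2)))*(k*s) + (se*v/(4*b^2))*(c-1) + (c-1) ] := by
  subst hvb; subst hε2
  ext i j
  fin_cases i <;> fin_cases j <;>
    simp [Matrix.mul_apply, Fin.sum_univ_two, Matrix.smul_apply, smul_eq_mul] <;>
    (field_simp; ring)

/-- hyperbolic normal form of the conjugated transfer matrix above E_l. -/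
theorem stmt19 (vb : ℝ) (hvb : 0 < vb) (l : ℕ) (hl : 1 ≤ l) (hleven : Even l)
    (K : Set ℝ) (hK : IsCompact K) :
    ∃ ε₀ > (0:ℝ), ∃ C : ℝ, ∀ v ∈ K, ∀ ε : ℝ, 0 < ε → ε ≤ ε₀ →
      opR (Meps vb l ε * TmatR v (El l + ε) * (Meps vb l ε)⁻¹ -
          (!![1 - Real.sqrt (vb / (2 * El l)) * Real.sqrt ε, 0;
              0, 1 + Real.sqrt (vb / (2 * El l)) * Real.sqrt ε]
            + Real.sqrt ε • (((v - vb) / (2 * Real.sqrt (2 * vb * El l))) •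
                !![(-1 : ℝ), 1; -1, 1])
            + ε • ((v / (4 * El l)) • !![(1 : ℝ), 1; 1, 1])))
        ≤ C * ε ^ ((3 : ℝ)/2) := by
  obtain ⟨R, hR⟩ : ∃ R, ∀ v ∈ K, |v| ≤ R := by
    obtain ⟨r, hr⟩ := hK.isBounded.subset_closedBall 0
    exact ⟨r, fun v hv => by simpa [Real.dist_eq] using hr hv⟩
  have hπ := Real.pi_pos
  have hπ3 := Real.pi_gt_three
  have hl1 : (1:ℝ) ≤ (l:ℝ) := by exact_mod_cast hl
  set p : ℝ := Real.pi * l with hp_def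
  clear_value p
  have hp3 : 3 ≤ p := by
    rw [hp_def]
    nlinarith only [hπ3, hl1, mul_le_mul_of_nonneg_left hl1 hπ.le]
  have hp : 0 < p := by linarith
  have hElp : El l = p^2 := by rw [El, hp_def]
  have hElpos : 0 < El l := by rw [hElp]; positivity
  set b : ℝ := (vb * El l / 2) ^ ((1:ℝ)/4) with hb_def
  clear_value b
  have hbpos : 0 < b := by
    rw [hb_def]; exact Real.rpow_pos_of_pos (by positivity) _
  have hb4 : b^4 = vb * El l / 2 := by
    rw [hb_def, ← Real.rpow_natCast ((vb * El l / 2) ^ ((1:ℝ)/4)) 4,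
      ← Real.rpow_mul (by positivity)]
    norm_num
  have hvb' : vb = 2*b^4/El l := by rw [hb4]; field_simp
  have hη : Real.sqrt (vb / (2 * El l)) = b^2 / El l := by
    rw [show vb / (2 * El l) = (b^2/El l)^2 by
      rw [hvb']; field_simp [hElpos.ne']]
    exact Real.sqrt_sq (by positivity)
  have h2vb : Real.sqrt (2 * vb * El l) = 2*b^2 := by
    rw [show 2 * vb * El l = (2*b^2)^2 by
      rw [hvb']; field_simp [hElpos.ne']]
    exact Real.sqrt_sq (by positivity)
  set Ce : ℝ := R/(2*(El l)^2) + b^2/(El l)^2 + 1/(4*b^2) + R/(4*b^2) + 1 with hCe_def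
  clear_value Ce
  refine ⟨1, one_pos, 4*Ce, ?_⟩
  intro v hv ε hε hε1
  have hRv := hR v hv
  have hR0 : 0 ≤ R := le_trans (abs_nonneg v) hRv
  set se := Real.sqrt ε with hse_def
  clear_value se
  have hsepos : 0 < se := by rw [hse_def]; exact Real.sqrt_pos.mpr hε
  have hse2 : se^2 = ε := by rw [hse_def]; exact Real.sq_sqrt hε.le
  have hse1 : se ≤ 1 := by
    rw [hse_def, show (1:ℝ) = Real.sqrt 1 by rw [Real.sqrt_one]]
    exact Real.sqrt_le_sqrt hε1
  have hεse : ε ≤ se := by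
    calc ε = se^2 := hse2.symm
      _ = se*se := sq se
      _ ≤ 1*se := mul_le_mul_of_nonneg_right hse1 hsepos.le
      _ = se := one_mul se
  have hε32 : ε ^ ((3:ℝ)/2) = ε * se := by
    rw [hse_def, show (3:ℝ)/2 = 1 + 1/2 by norm_num, Real.rpow_add hε,
      Real.rpow_one, ← Real.sqrt_eq_rpow]
  set k := Real.sqrt (El l + ε) with hk_def
  clear_value k
  have hkpos : 0 < k := by rw [hk_def]; exact Real.sqrt_pos.mpr (by positivity)
  have hk2 : k^2 = El l + ε := by rw [hk_def]; exact Real.sq_sqrt (by positivity)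
  have hk2' : k^2 = p^2 + ε := by rw [hk2, hElp]
  have hpk : p ≤ k := by
    rw [hk_def, show p = Real.sqrt (p^2) from (Real.sqrt_sq hp.le).symm, ← hElp]
    exact Real.sqrt_le_sqrt (by linarith)
  set δ := k - p with hδ_def
  clear_value δ
  have hδpos : 0 < δ := by
    rw [hδ_def]
    nlinarith only [hk2', hpk, hε, hp]
  have hδε : δ * (k + p) = ε := by rw [hδ_def]; linear_combination hk2'
  have hpδ : p * δ ≤ ε / 2 := by
    nlinarith only [hδε, mul_nonneg hδpos.le (sub_nonneg.mpr hpk)]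
  have hδ1 : δ ≤ 1 := by
    nlinarith only [hpδ, hε1, mul_nonneg (sub_nonneg.mpr hp3) hδpos.le]
  obtain ⟨m, hm⟩ := hleven
  have hkm : k = δ + m * (2*Real.pi) := by
    rw [hδ_def, hp_def, hm]; push_cast; ring
  have hs : Real.sin k = Real.sin δ := by
    rw [hkm]; exact Real.sin_add_nat_mul_two_pi δ m
  have hc : Real.cos k = Real.cos δ := by
    rw [hkm]; exact Real.cos_add_nat_mul_two_pi δ m
  have hsinδ : |Real.sin δ - δ| ≤ δ^3 := by
    have h1 := Real.sin_bound (x := δ) (by rw [abs_of_pos hδpos]; exact hδ1)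
    rw [abs_of_pos hδpos] at h1
    have e : Real.sin δ - δ = (Real.sin δ - (δ - δ^3/6)) + (-(δ^3/6)) := by ring
    rw [e]
    refine (abs_add_le _ _).trans ?_
    rw [abs_neg, abs_of_nonneg (div_nonneg (pow_nonneg hδpos.le 3) (by norm_num))]
    have hd43 : δ^4 ≤ δ^3 := by
      nlinarith only [mul_nonneg (pow_nonneg hδpos.le 3) (sub_nonneg.mpr hδ1)]
    have hd54 : δ^5 ≤ δ^4 := by
      nlinarith only [mul_nonneg (pow_nonneg hδpos.le 4) (sub_nonneg.mpr hδ1)]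
    nlinarith only [h1, hd43, hd54, pow_nonneg hδpos.le 3]
  have hsδ : |Real.sin δ| ≤ δ := by
    have := Real.abs_sin_le_abs (x := δ)
    rwa [abs_of_pos hδpos] at this
  have hks : |k * Real.sin k| ≤ ε := by
    rw [hs, abs_mul, abs_of_pos hkpos]
    calc k * |Real.sin δ| ≤ k * δ := mul_le_mul_of_nonneg_left hsδ hkpos.le
      _ ≤ δ * (k + p) := by nlinarith only [mul_nonneg hδpos.le hp.le]
      _ = ε := hδε
  have hδε6 : δ ≤ ε/6 := by
    nlinarith only [hpδ, mul_nonneg (sub_nonneg.mpr hp3) hδpos.le]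
  have hc1 : |Real.cos k - 1| ≤ ε^2 := by
    rw [hc]
    have hcδ : |Real.cos δ - 1| ≤ δ^2/2 := by
      rw [abs_le]
      constructor
      · nlinarith only [Real.one_sub_sq_div_two_le_cos (x := δ)]
      · nlinarith only [Real.cos_le_one δ, sq_nonneg δ]
    calc |Real.cos δ - 1| ≤ δ^2/2 := hcδ
      _ ≤ ε^2 := by nlinarith only [hδε6, hδpos, hε, mul_nonneg hδpos.le hε.le]
  have hX : |Real.sin k / k - ε/(2*El l)| ≤ ε^2/(El l)^2 := by
    have hnum : 2*(El l)*(Real.sin k) - ε*k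
        = 2*(El l)*(Real.sin δ - δ) - δ*(p*δ + ε) := by
      rw [hs, hElp, hδ_def]; linear_combination p * hk2'
    have heq : Real.sin k / k - ε/(2*El l)
        = (2*(El l)*(Real.sin δ - δ) - δ*(p*δ + ε)) / (2*(El l)*k) := by
      rw [← hnum]; field_simp
    have hnb : |2*(El l)*(Real.sin δ - δ) - δ*(p*δ + ε)| ≤ ε^2/p := by
      have t1 : |2*(El l)*(Real.sin δ - δ) - δ*(p*δ + ε)|
          ≤ 2*(El l)*|Real.sin δ - δ| + δ*(p*δ + ε) := by
        calc |2*(El l)*(Real.sin δ - δ) - δ*(p*δ + ε)|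
            ≤ |2*(El l)*(Real.sin δ - δ)| + |δ*(p*δ + ε)| := abs_sub _ _
          _ = 2*(El l)*|Real.sin δ - δ| + δ*(p*δ + ε) := by
              rw [abs_mul (2*(El l)) (Real.sin δ - δ), abs_mul δ (p*δ + ε),
                abs_of_pos (by nlinarith only [hElpos] : (0:ℝ) < 2*El l),
                abs_of_pos hδpos,
                abs_of_pos (by nlinarith only [mul_nonneg hp.le hδpos.le, hε] : (0:ℝ) < p*δ + ε)]
      have t2 : 2*(El l)*|Real.sin δ - δ| + δ*(p*δ + ε)
          ≤ 2*p^2*δ^3 + δ*(p*δ + ε) := by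
        rw [hElp]
        have := mul_le_mul_of_nonneg_left hsinδ
          (by positivity : (0:ℝ) ≤ 2*p^2)
        linarith
      refine (t1.trans t2).trans ?_
      rw [le_div_iff₀ hp]
      have g3 : (p*δ)^3 ≤ (ε/2)^3 := pow_le_pow_left₀ (mul_nonneg hp.le hδpos.le) hpδ 3
      have g2 : (p*δ)^2 ≤ (ε/2)^2 := pow_le_pow_left₀ (mul_nonneg hp.le hδpos.le) hpδ 2
      have hε3 : ε^3 ≤ ε^2 := by nlinarith only [mul_le_mul_of_nonneg_right hε1 (mul_nonneg hε.le hε.le)]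
      have hεδ : p*δ*ε ≤ ε/2*ε := mul_le_mul_of_nonneg_right hpδ hε.le
      nlinarith only [g3, g2, hε3, hεδ]
    rw [heq, abs_div, abs_of_pos (by nlinarith only [mul_pos hElpos hkpos] : (0:ℝ) < 2*El l*k)]
    calc |2*(El l)*(Real.sin δ - δ) - δ*(p*δ + ε)| / (2*El l*k)
        ≤ (ε^2/p) / (2*El l*p) := by
          apply div_le_div₀ (div_nonneg (pow_nonneg hε.le 2) hp.le) hnb
            (by nlinarith only [mul_pos hElpos hp] : (0:ℝ) < 2*El l*p)
          have := mul_le_mul_of_nonneg_left hpk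
            (by nlinarith only [hElpos] : (0:ℝ) ≤ 2*El l)
          linarith
      _ ≤ ε^2/(El l)^2 := by
          rw [hElp, div_div]
          apply div_le_div_of_nonneg_left (pow_nonneg hε.le 2)
            (pow_pos (pow_pos hp 2) 2)
          nlinarith only [pow_pos hp 2, pow_pos hp 4, pow_nonneg hp.le 4, hp]
  have hMeps : Meps vb l ε = !![se/(2*b), -b; se/(2*b), b] := by
    simp only [Meps]
    rw [← hb_def, ← hse_def]
    ext i j
    fin_cases i <;> fin_cases j <;>
      simp [Matrix.mul_apply, Fin.sum_univ_two] <;> try ring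
  have hMinv : (Meps vb l ε)⁻¹ = !![b/se, b/se; -(1/(2*b)), 1/(2*b)] := by
    apply inv_eq_right_inv
    rw [hMeps]
    ext i j
    fin_cases i <;> fin_cases j <;>
      simp [Matrix.mul_apply, Fin.sum_univ_two, Matrix.one_apply] <;>
      (try field_simp [hsepos.ne', hbpos.ne']) <;> try ring
  have hT : TmatR v (El l + ε)
      = !![1, v; 0, 1] * !![Real.cos k, -k * Real.sin k;
          Real.sin k / k, Real.cos k] := by
    simp only [TmatR]
    rw [hk_def]
  have hD := matid (El l) vb v b k (Real.sin k) (Real.cos k) se ε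
    hkpos.ne' hsepos.ne' hbpos.ne' hElpos.ne' hse2 hvb'
  rw [hMinv, hMeps, hT, hη, h2vb, hD]
  refine le_trans (opR_le_sum_abs _) ?_
  set X := Real.sin k / k - ε/(2*El l) with hX_def
  clear_value X
  set S := Real.sin k with hS_def
  clear_value S
  set Cc := Real.cos k with hCc_def
  clear_value Cc
  have h1 : |(v/2)*X| ≤ (R/2)*(ε^2/(El l)^2) := by
    rw [abs_mul]
    apply mul_le_mul _ hX (abs_nonneg _) (by positivity)
    rw [abs_div, abs_two]
    have : |v| ≤ R := hRv
    linarith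
  have h2 : |(b^2/se)*X| ≤ (b^2/(El l)^2)*(ε*se) := by
    rw [abs_mul, abs_of_pos (by positivity : (0:ℝ) < b^2/se)]
    calc (b^2/se)*|X| ≤ (b^2/se)*(ε^2/(El l)^2) :=
          mul_le_mul_of_nonneg_left hX (by positivity)
      _ = (b^2/(El l)^2)*(ε*se) := by
          rw [← hse2]; field_simp [hsepos.ne', hElpos.ne']
  have h3 : |(se/(4*b^2))*(k*S)| ≤ (1/(4*b^2))*(ε*se) := by
    rw [abs_mul, abs_of_pos (by positivity : (0:ℝ) < se/(4*b^2))]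
    calc (se/(4*b^2))*|k*S| ≤ (se/(4*b^2))*ε :=
          mul_le_mul_of_nonneg_left hks (by positivity)
      _ = (1/(4*b^2))*(ε*se) := by ring
  have h4 : |(se*v/(4*b^2))*(Cc-1)| ≤ (R/(4*b^2))*(ε*se) := by
    rw [abs_mul]
    have e1 : |se*v/(4*b^2)| ≤ se*R/(4*b^2) := by
      rw [abs_div, abs_mul, abs_of_pos hsepos,
        abs_of_pos (by positivity : (0:ℝ) < 4*b^2)]
      gcongr
    calc (|se*v/(4*b^2)|)*(|Cc-1|) ≤ (se*R/(4*b^2))*ε^2 :=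
          mul_le_mul e1 hc1 (abs_nonneg _) (by positivity)
      _ = (R/(4*b^2))*(se*ε^2) := by ring
      _ ≤ (R/(4*b^2))*(ε*se) := by
          apply mul_le_mul_of_nonneg_left _ (div_nonneg hR0 (by positivity))
          have hε2 : ε^2 ≤ ε := by
            nlinarith only [mul_le_mul_of_nonneg_right hε1 hε.le]
          nlinarith only [mul_le_mul_of_nonneg_left hε2 hsepos.le]
  have h5 : |Cc - 1| ≤ ε*se :=
    hc1.trans (by nlinarith only [hεse, hε])
  have h1' : (R/2)*(ε^2/(El l)^2) ≤ (R/(2*(El l)^2))*(ε*se) := by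
    rw [show (R/2)*(ε^2/(El l)^2) = (R/(2*(El l)^2))*ε^2 by ring]
    apply mul_le_mul_of_nonneg_left _ (div_nonneg hR0 (by positivity))
    nlinarith only [hεse, hε]
  have hent : ∀ x : ℝ, |x| ≤ |(v/2)*X| + |(b^2/se)*X| + |(se/(4*b^2))*(k*S)|
        + |(se*v/(4*b^2))*(Cc-1)| + |Cc-1| → |x| ≤ Ce * (ε*se) := by
    intro x hx
    have hce : Ce * (ε*se) = (R/(2*(El l)^2))*(ε*se) + (b^2/(El l)^2)*(ε*se)
        + (1/(4*b^2))*(ε*se) + (R/(4*b^2))*(ε*se) + 1*(ε*se) := by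
      rw [hCe_def]; ring
    rw [hce]
    have h1'' := h1.trans h1'
    have h5' : |Cc - 1| ≤ 1*(ε*se) := by rw [one_mul]; exact h5
    linarith only [hx, h1'', h2, h3, h4, h5']
  have E00 : |(v/2)*X + (-(b^2/se))*X + (se/(4*b^2))*(k*S)
      + (-(se*v/(4*b^2)))*(Cc-1) + (Cc-1)| ≤ Ce * (ε*se) := by
    refine hent _ ((habs5 _ _ _ _ _).trans ?_)
    simp only [neg_mul, abs_neg]
    linarith only [abs_nonneg (Cc-1)]
  have E01 : |(v/2)*X + (-(b^2/se))*X + (-(se/(4*b^2)))*(k*S)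
      + (se*v/(4*b^2))*(Cc-1) + 0| ≤ Ce * (ε*se) := by
    refine hent _ ((habs5 _ _ _ _ _).trans ?_)
    simp only [neg_mul, abs_neg, abs_zero]
    linarith only [abs_nonneg (Cc-1)]
  have E10 : |(v/2)*X + (b^2/se)*X + (se/(4*b^2))*(k*S)
      + (-(se*v/(4*b^2)))*(Cc-1) + 0| ≤ Ce * (ε*se) := by
    refine hent _ ((habs5 _ _ _ _ _).trans ?_)
    simp only [neg_mul, abs_neg, abs_zero]
    linarith only [abs_nonneg (Cc-1)]
  have E11 : |(v/2)*X + (b^2/se)*X + (-(se/(4*b^2)))*(k*S)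
      + (se*v/(4*b^2))*(Cc-1) + (Cc-1)| ≤ Ce * (ε*se) := by
    refine hent _ ((habs5 _ _ _ _ _).trans ?_)
    simp only [neg_mul, abs_neg]
    linarith only [abs_nonneg (Cc-1)]
  rw [hε32]
  try simp only [Matrix.of_apply, Matrix.cons_val', Matrix.cons_val_zero,
    Matrix.cons_val_one, Matrix.head_cons, Matrix.empty_val',
    Matrix.cons_val_fin_one, Matrix.head_fin_const]
  linarith only [E00, E01, E10, E11]

end
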